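/- Let Q_k (k ≥ 2) be the tree obtained from two copies of the star K_{1,k−1} by identifying a leaf of one copy with a leaf of the other (so Q_k has 2k−1 vertices, diameter 4, with the unique degree-2 vertex adjacent to the two centers). Then cfc(Q_k) = k, and Q_k is k-cfc-critical: every proper subtree T' of Q_k satisfies cfc(T') < k. -/
import Mathlib


/-- `c` is a conflict-free connection coloring of `G`: every pair of distinct
vertices is joined by a path on which some color appears on exactly one edge. -/
def IsCFCColoring {V : Type*} (G : SimpleGraph V) (c : Sym2 V → ℕ) : Prop :=
  ∀ u v : V, u ≠ v → ∃ p : G.Walk u v, p.IsPath ∧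
    ∃ col : ℕ, (p.edges.filter (fun e => c e = col)).length = 1

/-- The conflict-free connection number of `G`: the least `k` such that some
coloring of the edges of `G` with colors `0, …, k-1` is a conflict-free
connection coloring. -/
noncomputable def cfcNum {V : Type*} [Fintype V] (G : SimpleGraph V) : ℕ :=
  sInf {k | ∃ c : Sym2 V → ℕ, (∀ e ∈ G.edgeSet, c e < k) ∧ IsCFCColoring G c}

open SimpleGraph

section Aux
variable {V : Type*} {H : SimpleGraph V} {c : Sym2 V → ℕ}

/-- There is a path from `a` to `b` with a uniquely-occurring color. -/
def GoodPair (H : SimpleGraph V) (c : Sym2 V → ℕ) (a b : V) : Prop :=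
  ∃ p : H.Walk a b, p.IsPath ∧ ∃ col : ℕ, (p.edges.filter (fun e => c e = col)).length = 1

lemma sym2_ne {a b x y : V} (h : ¬((a = x ∧ b = y) ∨ (a = y ∧ b = x))) :
    s(a,b) ≠ s(x,y) := by rw [Ne, Sym2.eq_iff]; exact h

lemma GoodPair.symm {a b : V} (h : GoodPair H c a b) : GoodPair H c b a := by
  obtain ⟨p, hp, col, hcol⟩ := h
  exact ⟨p.reverse, hp.reverse, col, by
    rw [SimpleGraph.Walk.edges_reverse, List.filter_reverse, List.length_reverse]; exact hcol⟩

lemma good1 {a b : V} (h : H.Adj a b) : GoodPair H c a b :=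
  ⟨Walk.cons h Walk.nil, by simp [h.ne], c s(a,b), by simp [List.filter]⟩

lemma good2 {a x b : V} (h1 : H.Adj a x) (h2 : H.Adj x b) (hab : a ≠ b)
    (hc : c s(a,x) ≠ c s(x,b)) : GoodPair H c a b := by
  refine ⟨Walk.cons h1 (Walk.cons h2 Walk.nil), ?_, c s(a,x), ?_⟩
  · simp [Walk.isPath_def, h1.ne, h2.ne, hab]
  · simp [List.filter, hc.symm]

lemma good3 {a x y b : V} (h1 : H.Adj a x) (h2 : H.Adj x y) (h3 : H.Adj y b)
    (hay : a ≠ y) (hab : a ≠ b) (hxb : x ≠ b) (col : ℕ)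
    (hf : (([s(a,x), s(x,y), s(y,b)]).filter (fun e => c e = col)).length = 1) :
    GoodPair H c a b := by
  refine ⟨Walk.cons h1 (Walk.cons h2 (Walk.cons h3 Walk.nil)), ?_, col, ?_⟩
  · simp [Walk.isPath_def, h1.ne, h2.ne, h3.ne, hay, hab, hxb, List.Nodup]
  · simpa using hf

lemma good4 {a x y z b : V} (h1 : H.Adj a x) (h2 : H.Adj x y) (h3 : H.Adj y z)
    (h4 : H.Adj z b) (hay : a ≠ y) (haz : a ≠ z) (hab : a ≠ b)
    (hxz : x ≠ z) (hxb : x ≠ b) (hyb : y ≠ b) (col : ℕ)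
    (hf : (([s(a,x), s(x,y), s(y,z), s(z,b)]).filter (fun e => c e = col)).length = 1) :
    GoodPair H c a b := by
  refine ⟨Walk.cons h1 (Walk.cons h2 (Walk.cons h3 (Walk.cons h4 Walk.nil))), ?_, col, ?_⟩
  · simp [Walk.isPath_def, h1.ne, h2.ne, h3.ne, h4.ne, hay, haz, hab, hxz, hxb, hyb, List.Nodup]
  · simpa using hf

/-- CFC coloring for a "star-like" situation. -/
lemma star_cfc (z : V) (hadj : ∀ x, x ≠ z → H.Adj z x)
    (hinj : ∀ x y, x ≠ z → y ≠ z → x ≠ y → c s(z,x) ≠ c s(z,y)) :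
    IsCFCColoring H c := by
  intro a b hab
  by_cases ha : a = z
  · subst ha; exact good1 (hadj b (Ne.symm hab))
  by_cases hb : b = z
  · subst hb; exact (good1 (hadj a ha)).symm
  · have h1 : H.Adj a z := (hadj a ha).symm
    have h2 : H.Adj z b := hadj b hb
    refine good2 h1 h2 hab ?_
    rw [show s(a,z) = s(z,a) from Sym2.eq_swap]
    exact hinj a b ha hb hab

end Aux
section DS
variable {V : Type*} {H : SimpleGraph V} {c : Sym2 V → ℕ}

lemma ds_cfc (u v w : V)
    (hu : H.Adj u w) (hv : H.Adj v w) (huv : u ≠ v)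
    (hclass : ∀ x, x = u ∨ x = v ∨ x = w ∨
      (H.Adj u x ∧ x ≠ v ∧ x ≠ w) ∨ (H.Adj v x ∧ x ≠ u ∧ x ≠ w))
    (hdisj : ∀ x, x ≠ w → ¬(H.Adj u x ∧ H.Adj v x))
    (cinjU : ∀ x y, H.Adj u x → H.Adj u y → x ≠ y → c s(u,x) ≠ c s(u,y))
    (cinjV : ∀ x y, H.Adj v x → H.Adj v y → x ≠ y → c s(v,x) ≠ c s(v,y))
    (cuniq : ∀ a b, H.Adj a b → s(a,b) ≠ s(u,w) → c s(a,b) ≠ c s(u,w)) :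
    IsCFCColoring H c := by
  have huw : u ≠ w := hu.ne
  have hvw : v ≠ w := hv.ne
  have hvu : v ≠ u := huv.symm
  have cwv : c s(w,v) ≠ c s(u,w) := cuniq w v hv.symm (sym2_ne (by tauto))
  have guv : GoodPair H c u v :=
    good2 hu hv.symm huv (Ne.symm cwv)
  have guLv : ∀ b, H.Adj v b → b ≠ u → b ≠ w → GoodPair H c u b := by
    intro b hb hbu hbw
    have f3 : c s(v,b) ≠ c s(u,w) := cuniq v b hb (sym2_ne (by tauto))
    exact good3 hu hv.symm hb huv (Ne.symm hbu) (Ne.symm hbw) (c s(u,w))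
      (by simp [List.filter, cwv, f3])
  have gvLu : ∀ b, H.Adj u b → b ≠ v → b ≠ w → GoodPair H c v b := by
    intro b hb hbv hbw
    have f1 : c s(v,w) ≠ c s(u,w) := cuniq v w hv (sym2_ne (by tauto))
    have f2 : c s(w,u) = c s(u,w) := by rw [Sym2.eq_swap]
    have f3 : c s(u,b) ≠ c s(u,w) := cuniq u b hb (sym2_ne (by tauto))
    exact good3 hv hu.symm hb hvu (Ne.symm hbv) (Ne.symm hbw) (c s(u,w))
      (by simp [List.filter, f1, f2, f3])
  have gwLu : ∀ b, H.Adj u b → b ≠ w → GoodPair H c w b := by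
    intro b hb hbw
    refine good2 hu.symm hb (Ne.symm hbw) ?_
    rw [show s(w,u) = s(u,w) from Sym2.eq_swap]
    exact cinjU w b hu hb (Ne.symm hbw)
  have gwLv : ∀ b, H.Adj v b → b ≠ w → GoodPair H c w b := by
    intro b hb hbw
    refine good2 hv.symm hb (Ne.symm hbw) ?_
    rw [show s(w,v) = s(v,w) from Sym2.eq_swap]
    exact cinjV w b hv hb (Ne.symm hbw)
  have gLuLu : ∀ a b, H.Adj u a → H.Adj u b → a ≠ b → GoodPair H c a b := by
    intro a b ha hb hab
    refine good2 ha.symm hb hab ?_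
    rw [show s(a,u) = s(u,a) from Sym2.eq_swap]
    exact cinjU a b ha hb hab
  have gLvLv : ∀ a b, H.Adj v a → H.Adj v b → a ≠ b → GoodPair H c a b := by
    intro a b ha hb hab
    refine good2 ha.symm hb hab ?_
    rw [show s(a,v) = s(v,a) from Sym2.eq_swap]
    exact cinjV a b ha hb hab
  have gLuLv : ∀ a b, H.Adj u a → a ≠ v → a ≠ w → H.Adj v b → b ≠ u → b ≠ w →
      GoodPair H c a b := by
    intro a b ha hav haw hb hbu hbw
    have hab : a ≠ b := by
      rintro rfl; exact hdisj a haw ⟨ha, hb⟩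
    have f1 : c s(a,u) ≠ c s(u,w) := cuniq a u ha.symm (sym2_ne (by tauto))
    have f4 : c s(v,b) ≠ c s(u,w) := cuniq v b hb (sym2_ne (by tauto))
    exact good4 ha.symm hu hv.symm hb haw hav hab huv (Ne.symm hbu) (Ne.symm hbw)
      (c s(u,w)) (by simp [List.filter, f1, cwv, f4])
  intro a b hab
  rcases hclass a with rfl | rfl | rfl | ⟨hau, hav, haw2⟩ | ⟨hav2, hau2, haw2⟩
  · rcases hclass b with rfl | rfl | rfl | ⟨hbu, hbv, hbw2⟩ | ⟨hbv2, hbu2, hbw2⟩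
    · exact absurd rfl hab
    · exact guv
    · exact good1 hu
    · exact good1 hbu
    · exact guLv b hbv2 hbu2 hbw2
  · rcases hclass b with rfl | rfl | rfl | ⟨hbu, hbv, hbw2⟩ | ⟨hbv2, hbu2, hbw2⟩
    · exact guv.symm
    · exact absurd rfl hab
    · exact good1 hv
    · exact gvLu b hbu hbv hbw2
    · exact good1 hbv2
  · rcases hclass b with rfl | rfl | rfl | ⟨hbu, hbv, hbw2⟩ | ⟨hbv2, hbu2, hbw2⟩
    · exact (good1 hu).symm
    · exact (good1 hv).symm
    · exact absurd rfl hab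
    · exact gwLu b hbu hbw2
    · exact gwLv b hbv2 hbw2
  · rcases hclass b with rfl | rfl | rfl | ⟨hbu, hbv, hbw2⟩ | ⟨hbv2, hbu2, hbw2⟩
    · exact (good1 hau).symm
    · exact (gvLu a hau hav haw2).symm
    · exact (gwLu a hau haw2).symm
    · exact gLuLu a b hau hbu hab
    · exact gLuLv a b hau hav haw2 hbv2 hbu2 hbw2
  · rcases hclass b with rfl | rfl | rfl | ⟨hbu, hbv, hbw2⟩ | ⟨hbv2, hbu2, hbw2⟩
    · exact (guLv a hav2 hau2 haw2).symm
    · exact (good1 hav2).symm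
    · exact (gwLv a hav2 haw2).symm
    · exact (gLuLv b a hbu hbv hbw2 hav2 hau2 haw2).symm
    · exact gLvLv a b hav2 hbv2 hab

end DS
section Idx
variable {V : Type*} [DecidableEq V]

noncomputable def finIdx (s : Finset V) (x : V) : ℕ :=
  if hx : x ∈ s then (s.equivFin ⟨x, hx⟩ : ℕ) else 0

lemma finIdx_lt {s : Finset V} {x : V} (hx : x ∈ s) : finIdx s x < s.card := by
  rw [finIdx, dif_pos hx]; exact (s.equivFin ⟨x, hx⟩).isLt

lemma finIdx_inj {s : Finset V} {x y : V} (hx : x ∈ s) (hy : y ∈ s) (h : x ≠ y) :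
    finIdx s x ≠ finIdx s y := by
  rw [finIdx, finIdx, dif_pos hx, dif_pos hy]
  intro heq
  exact h (congrArg Subtype.val (s.equivFin.injective (Fin.val_injective heq)))

end Idx

section LB
open SimpleGraph

lemma lb_lemma {V : Type*} [Fintype V] [DecidableEq V] (G : SimpleGraph V)
    [DecidableRel G.Adj] (hG : G.IsTree) (k : ℕ) (u v w : V) (huv : u ≠ v)
    (hu : G.Adj u w) (hv : G.Adj v w)
    (hdu : G.degree u = k - 1) (hdv : G.degree v = k - 1)
    (hnadj : ¬ G.Adj u v)
    (hdisj : ∀ x, x ≠ w → ¬(G.Adj u x ∧ G.Adj v x))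
    (c : Sym2 V → ℕ) (hcol : ∀ e ∈ G.edgeSet, c e < k - 1)
    (hc : IsCFCColoring G c) : False := by
  have pu : ∀ x y z : V, G.Adj x y → G.Adj y z → x ≠ z → c s(x,y) ≠ c s(y,z) := by
    intro x y z h1 h2 hxz heq
    obtain ⟨p, hp, col, hcol1⟩ := hc x z hxz
    have hq : (Walk.cons h1 (Walk.cons h2 Walk.nil) : G.Walk x z).IsPath := by
      simp [Walk.isPath_def, h1.ne, h2.ne, hxz]
    have hpq : p = Walk.cons h1 (Walk.cons h2 Walk.nil) :=
      congrArg Subtype.val (hG.IsAcyclic.path_unique ⟨p, hp⟩ ⟨_, hq⟩)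
    rw [hpq] at hcol1
    simp only [Walk.edges_cons, Walk.edges_nil] at hcol1
    rcases eq_or_ne (c s(x,y)) col with h | h
    · have h2c : c s(y,z) = col := heq ▸ h
      simp [List.filter, h, h2c] at hcol1
    · have h2c : c s(y,z) ≠ col := heq ▸ h
      simp [List.filter, h, h2c] at hcol1
  have getx : ∀ z z' : V, G.degree z = k - 1 → G.Adj z w → G.Adj z' w → z ≠ z' →
      ∃ x, G.Adj z x ∧ x ≠ w ∧ c s(z,x) = c s(z',w) := by
    intro z z' hz hzw hz'w hzz'
    have himg : (G.neighborFinset z).image (fun x => c s(z,x)) = Finset.range (k-1) := by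
      apply Finset.eq_of_subset_of_card_le
      · intro m hm
        simp only [Finset.mem_image] at hm
        obtain ⟨x, hx, rfl⟩ := hm
        exact Finset.mem_range.2 (hcol _ ((mem_edgeSet G).2 ((mem_neighborFinset G z x).1 hx)))
      · rw [Finset.card_range, Finset.card_image_of_injOn, card_neighborFinset_eq_degree, hz]
        intro x hx y hy hxy
        by_contra hne
        apply pu x z y ((mem_neighborFinset G z x).1 hx).symm ((mem_neighborFinset G z y).1 hy) hne
        rw [show s(x,z) = s(z,x) from Sym2.eq_swap]; exact hxy
    have hmem : c s(z',w) ∈ Finset.range (k-1) :=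
      Finset.mem_range.2 (hcol _ ((mem_edgeSet G).2 hz'w))
    rw [← himg] at hmem
    simp only [Finset.mem_image] at hmem
    obtain ⟨x, hx, hxc⟩ := hmem
    have hadj : G.Adj z x := (mem_neighborFinset G z x).1 hx
    refine ⟨x, hadj, ?_, hxc⟩
    intro hxw0
    rw [hxw0] at hxc
    apply pu z w z' hzw hz'w.symm hzz'
    rw [show s(w,z') = s(z',w) from Sym2.eq_swap]; exact hxc
  obtain ⟨x, hxadj, hxw, hxc⟩ := getx u v hdu hu hv huv
  obtain ⟨y, hyadj, hyw, hyc⟩ := getx v u hdv hv hu huv.symm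
  have hxv : x ≠ v := fun h => hnadj (h ▸ hxadj)
  have hyu : y ≠ u := fun h => hnadj (h ▸ hyadj).symm
  have hxy : x ≠ y := by rintro rfl; exact hdisj x hxw ⟨hxadj, hyadj⟩
  obtain ⟨p, hp, col, hcol1⟩ := hc x y hxy
  have hq : (Walk.cons hxadj.symm (Walk.cons hu (Walk.cons hv.symm
      (Walk.cons hyadj Walk.nil))) : G.Walk x y).IsPath := by
    simp [Walk.isPath_def, hxadj.ne', hxw, hxv, hxy, hu.ne, huv, Ne.symm hyu,
      Ne.symm (hv.ne), Ne.symm hyw, hyadj.ne]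
  have hpq : p = _ := congrArg Subtype.val (hG.IsAcyclic.path_unique ⟨p, hp⟩ ⟨_, hq⟩)
  rw [hpq] at hcol1
  simp only [Walk.edges_cons, Walk.edges_nil] at hcol1
  have e1 : c s(x,u) = c s(w,v) := by
    rw [show s(x,u) = s(u,x) from Sym2.eq_swap, show s(w,v) = s(v,w) from Sym2.eq_swap]
    exact hxc
  have e4 : c s(v,y) = c s(u,w) := hyc
  rcases eq_or_ne (c s(u,w)) col with h2 | h2 <;> rcases eq_or_ne (c s(w,v)) col with h3 | h3 <;>
    simp [List.filter, e1, e4, h2, h3] at hcol1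

end LB
section StarCase
open SimpleGraph
variable {V : Type*} [Fintype V] [DecidableEq V]

lemma star_case (G : SimpleGraph V) (S : Finset V) (k : ℕ) (z : V) (Lz : Finset V)
    (hzS : z ∈ S) (hLcard : Lz.card ≤ k - 1)
    (hmemS : ∀ x : V, x ∈ S → x ≠ z → x ∈ Lz)
    (hadjz : ∀ x ∈ Lz, G.Adj z x)
    (hnoedge : ∀ x ∈ Lz, ∀ y ∈ Lz, ¬ G.Adj x y) :
    ∃ c' : Sym2 ↥(S:Set V) → ℕ, (∀ e ∈ (G.induce (S:Set V)).edgeSet, c' e < k-1) ∧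
      IsCFCColoring (G.induce (S:Set V)) c' := by
  have hzLz : z ∉ Lz := fun h => (hadjz z h).ne rfl
  have hidx0 : finIdx Lz z = 0 := dif_neg hzLz
  refine ⟨fun e => Sym2.lift ⟨fun (a b : ↥(S:Set V)) => finIdx Lz ↑a + finIdx Lz ↑b,
    fun a b => by ring⟩ e, ?_, ?_⟩
  · intro e he
    induction e using Sym2.ind with
    | _ p q =>
      have hadj : G.Adj ↑p ↑q := by simpa using he
      have hone : ↑p = z ∨ ↑q = z := by
        by_contra hcon
        push_neg at hcon
        exact hnoedge _ (hmemS ↑p p.2 hcon.1) _ (hmemS ↑q q.2 hcon.2) hadj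
      rcases hone with hp | hq
      · have hq' : (↑q : V) ≠ z := fun h => hadj.ne (by rw [hp, h])
        have hqL : ↑q ∈ Lz := hmemS ↑q q.2 hq'
        have := finIdx_lt hqL
        simp only [Sym2.lift_mk, hp, hidx0]
        omega
      · have hp' : (↑p : V) ≠ z := fun h => hadj.ne (by rw [hq, h])
        have hpL : ↑p ∈ Lz := hmemS ↑p p.2 hp'
        have := finIdx_lt hpL
        simp only [Sym2.lift_mk, hq, hidx0]
        omega
  · apply star_cfc (⟨z, Finset.mem_coe.2 hzS⟩ : ↥(S:Set V))
    · intro x hx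
      have hx' : (↑x : V) ≠ z := fun h => hx (Subtype.ext h)
      simpa using hadjz ↑x (hmemS ↑x x.2 hx')
    · intro x y hx hy hxy
      have hx' : (↑x : V) ≠ z := fun h => hx (Subtype.ext h)
      have hy' : (↑y : V) ≠ z := fun h => hy (Subtype.ext h)
      have hxy' : (↑x : V) ≠ ↑y := fun h => hxy (Subtype.ext h)
      simp only [Sym2.lift_mk, hidx0]
      have := finIdx_inj (hmemS ↑x x.2 hx') (hmemS ↑y y.2 hy') hxy'
      omega

end StarCase
section CaseC
open SimpleGraph
variable {V : Type*} [Fintype V] [DecidableEq V]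

lemma caseC_lemma (G : SimpleGraph V) (S : Finset V) (k : ℕ) (hk3 : 3 ≤ k)
    (a b w : V) (La Lb : Finset V)
    (haS : a ∈ S) (hbS : b ∈ S) (hwS : w ∈ S)
    (haw : G.Adj a w) (hbw : G.Adj b w) (hab : a ≠ b) (hnab : ¬ G.Adj a b)
    (hLa : ∀ x, x ∈ La ↔ G.Adj a x ∧ x ≠ w) (hLb : ∀ x, x ∈ Lb ↔ G.Adj b x ∧ x ≠ w)
    (hcardLa : La.card = k - 2) (hcardLb : Lb.card = k - 2)
    (hdisj : ∀ x, x ≠ w → ¬(G.Adj a x ∧ G.Adj b x))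
    (hclass : ∀ x : V, x = a ∨ x = b ∨ x = w ∨
      (G.Adj a x ∧ x ≠ b ∧ x ≠ w) ∨ (G.Adj b x ∧ x ≠ a ∧ x ≠ w))
    (hedge : ∀ p q, G.Adj p q → s(p,q) = s(a,w) ∨ s(p,q) = s(b,w) ∨
      (∃ x, x ∈ La ∧ s(p,q) = s(a,x)) ∨ (∃ x, x ∈ Lb ∧ s(p,q) = s(b,x)))
    (z : V) (hzLb : z ∈ Lb) (hzS : z ∉ S) :
    ∃ c' : Sym2 ↥(S:Set V) → ℕ, (∀ e ∈ (G.induce (S:Set V)).edgeSet, c' e < k-1) ∧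
      IsCFCColoring (G.induce (S:Set V)) c' := by
  have haw' : a ≠ w := haw.ne
  have hbw' : b ≠ w := hbw.ne
  set LbS : Finset V := Lb ∩ S with hLbS
  have hcardLbS : LbS.card ≤ k - 3 := by
    have hsub : LbS ⊆ Lb.erase z := by
      intro x hx
      rw [Finset.mem_inter] at hx
      exact Finset.mem_erase.2 ⟨fun h => hzS (h ▸ hx.2), hx.1⟩
    calc LbS.card ≤ (Lb.erase z).card := Finset.card_le_card hsub
      _ = k - 2 - 1 := by rw [Finset.card_erase_of_mem hzLb, hcardLb]
      _ ≤ k - 3 := by omega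
  set g2 : V → ℕ := fun x =>
    if x ∈ La then finIdx La x + 1 else if x ∈ LbS then finIdx LbS x + 2 else 0 with hg2
  set c2 : Sym2 V → ℕ := fun e => if e = s(a,w) then 0 else if e = s(b,w) then 1 else
    Sym2.lift ⟨fun p q => g2 p + g2 q, fun p q => by ring⟩ e with hc2
  -- basic values
  have g2a : g2 a = 0 := by
    rw [hg2]
    simp only
    rw [if_neg (fun h => ((hLa a).1 h).1.ne rfl),
      if_neg (fun h => hnab ((hLb a).1 (Finset.mem_inter.1 h).1).1.symm)]
  have g2b : g2 b = 0 := by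
    rw [hg2]
    simp only
    rw [if_neg (fun h => hnab ((hLa b).1 h).1),
      if_neg (fun h => ((hLb b).1 (Finset.mem_inter.1 h).1).1.ne rfl)]
  have g2La : ∀ x ∈ La, g2 x = finIdx La x + 1 := fun x hx => by
    rw [hg2]; simp only; rw [if_pos hx]
  have g2LbS : ∀ x ∈ LbS, g2 x = finIdx LbS x + 2 := fun x hx => by
    have hxLa : x ∉ La := by
      intro h
      have h1 := (hLa x).1 h
      have h2 := (hLb x).1 (Finset.mem_inter.1 hx).1
      exact hdisj x h1.2 ⟨h1.1, h2.1⟩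
    rw [hg2]; simp only; rw [if_neg hxLa, if_pos hx]
  have g2Lab : ∀ x, (x ∈ La ∨ x ∈ LbS) → 1 ≤ g2 x ∧ g2 x ≤ k - 2 := by
    intro x hx
    rcases hx with h | h
    · rw [g2La x h]
      have := finIdx_lt h
      omega
    · rw [g2LbS x h]
      have := finIdx_lt h
      omega
  have c2aw : c2 s(a,w) = 0 := by simp [hc2]
  have c2bw : c2 s(b,w) = 1 := by
    simp only [hc2]
    rw [if_neg (sym2_ne (by tauto))]
    simp
  have c2La : ∀ x ∈ La, c2 s(a,x) = g2 x := by
    intro x hx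
    obtain ⟨hax, hxw⟩ := (hLa x).1 hx
    simp only [hc2]
    rw [if_neg (sym2_ne (by tauto)), if_neg (sym2_ne (by tauto)), Sym2.lift_mk]
    simp only [g2a, Nat.zero_add]
  have c2Lb : ∀ x ∈ LbS, c2 s(b,x) = g2 x := by
    intro x hx
    obtain ⟨hbx, hxw⟩ := (hLb x).1 (Finset.mem_inter.1 hx).1
    have hxa : x ≠ a := fun h => hnab (h ▸ hbx).symm
    simp only [hc2]
    rw [if_neg (sym2_ne (by tauto)), if_neg (sym2_ne (by tauto)), Sym2.lift_mk]
    simp only [g2b, Nat.zero_add]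
  set c' : Sym2 ↥(S:Set V) → ℕ := fun e => c2 (Sym2.map Subtype.val e) with hc'
  have c'mk : ∀ p q : ↥(S:Set V), c' s(p,q) = c2 s(↑p,↑q) := by
    intro p q; rw [hc']; simp
  -- edge value classification for edges inside S
  have edgeval : ∀ p q : ↥(S:Set V), G.Adj ↑p ↑q →
      c2 s(↑p,↑q) = 0 ∧ s(↑p,↑q) = s(a,w) ∨
      (1 ≤ c2 s(↑p,↑q) ∧ c2 s(↑p,↑q) ≤ k - 2) := by
    intro p q hadj
    rcases hedge ↑p ↑q hadj with h | h | ⟨x, hx, h⟩ | ⟨x, hx, h⟩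
    · exact Or.inl ⟨by rw [h, c2aw], h⟩
    · refine Or.inr ?_
      rw [h, c2bw]
      omega
    · refine Or.inr ?_
      rw [h, c2La x hx]
      exact g2Lab x (Or.inl hx)
    · -- x must be in S
      have hxS : x ∈ S := by
        rcases Sym2.eq_iff.1 h with ⟨h1, h2⟩ | ⟨h1, h2⟩
        · exact h2 ▸ Finset.mem_coe.1 q.2
        · exact h1 ▸ Finset.mem_coe.1 p.2
      have hxLbS : x ∈ LbS := Finset.mem_inter.2 ⟨hx, hxS⟩
      refine Or.inr ?_
      rw [h, c2Lb x hxLbS]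
      exact g2Lab x (Or.inr hxLbS)
  refine ⟨c', ?_, ?_⟩
  · intro e he
    induction e using Sym2.ind with
    | _ p q =>
      have hadj : G.Adj ↑p ↑q := by simpa using he
      rw [c'mk]
      rcases edgeval p q hadj with ⟨h, _⟩ | ⟨h1, h2⟩ <;> omega
  · -- apply ds_cfc
    have hSadj : ∀ x y : ↥(S:Set V), G.Adj ↑x ↑y → (G.induce (S:Set V)).Adj x y := by
      intro x y h; simpa using h
    apply ds_cfc (⟨a, Finset.mem_coe.2 haS⟩ : ↥(S:Set V)) ⟨b, Finset.mem_coe.2 hbS⟩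
      ⟨w, Finset.mem_coe.2 hwS⟩ (hSadj _ _ haw) (hSadj _ _ hbw)
      (fun h => hab (congrArg Subtype.val h))
    · -- hclass
      intro x
      rcases hclass ↑x with h | h | h | ⟨h1, h2, h3⟩ | ⟨h1, h2, h3⟩
      · exact Or.inl (Subtype.ext h)
      · exact Or.inr (Or.inl (Subtype.ext h))
      · exact Or.inr (Or.inr (Or.inl (Subtype.ext h)))
      · exact Or.inr (Or.inr (Or.inr (Or.inl ⟨hSadj _ _ h1,
          fun hh => h2 (congrArg Subtype.val hh), fun hh => h3 (congrArg Subtype.val hh)⟩)))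
      · exact Or.inr (Or.inr (Or.inr (Or.inr ⟨hSadj _ _ h1,
          fun hh => h2 (congrArg Subtype.val hh), fun hh => h3 (congrArg Subtype.val hh)⟩)))
    · -- hdisj
      intro x hx ⟨h1, h2⟩
      have hx' : (↑x : V) ≠ w := fun h => hx (Subtype.ext h)
      exact hdisj ↑x hx' ⟨by simpa using h1, by simpa using h2⟩
    · -- cinjU
      intro x y hx hy hxy
      have hx' : G.Adj a ↑x := by simpa using hx
      have hy' : G.Adj a ↑y := by simpa using hy
      have hxy' : (↑x : V) ≠ ↑y := fun h => hxy (Subtype.ext h)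
      rw [c'mk, c'mk]
      by_cases hxw : (↑x : V) = w
      · have hyw : (↑y : V) ≠ w := fun h => hxy' (by rw [hxw, h])
        have hyLa : ↑y ∈ La := (hLa _).2 ⟨hy', hyw⟩
        rw [hxw, c2aw, c2La _ hyLa]
        have := g2Lab _ (Or.inl hyLa)
        omega
      · have hxLa : ↑x ∈ La := (hLa _).2 ⟨hx', hxw⟩
        by_cases hyw : (↑y : V) = w
        · rw [hyw, c2aw, c2La _ hxLa]
          have := g2Lab _ (Or.inl hxLa)
          omega
        · have hyLa : ↑y ∈ La := (hLa _).2 ⟨hy', hyw⟩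
          rw [c2La _ hxLa, c2La _ hyLa, g2La _ hxLa, g2La _ hyLa]
          have := finIdx_inj hxLa hyLa hxy'
          omega
    · -- cinjV
      intro x y hx hy hxy
      have hx' : G.Adj b ↑x := by simpa using hx
      have hy' : G.Adj b ↑y := by simpa using hy
      have hxy' : (↑x : V) ≠ ↑y := fun h => hxy (Subtype.ext h)
      rw [c'mk, c'mk]
      by_cases hxw : (↑x : V) = w
      · have hyw : (↑y : V) ≠ w := fun h => hxy' (by rw [hxw, h])
        have hyLa : ↑y ∈ LbS := Finset.mem_inter.2 ⟨(hLb _).2 ⟨hy', hyw⟩, Finset.mem_coe.1 y.2⟩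
        rw [hxw, c2bw, c2Lb _ hyLa, g2LbS _ hyLa]
        omega
      · have hxLb : ↑x ∈ LbS := Finset.mem_inter.2 ⟨(hLb _).2 ⟨hx', hxw⟩, Finset.mem_coe.1 x.2⟩
        by_cases hyw : (↑y : V) = w
        · rw [hyw, c2bw, c2Lb _ hxLb, g2LbS _ hxLb]
          omega
        · have hyLb : ↑y ∈ LbS := Finset.mem_inter.2 ⟨(hLb _).2 ⟨hy', hyw⟩, Finset.mem_coe.1 y.2⟩
          rw [c2Lb _ hxLb, c2Lb _ hyLb, g2LbS _ hxLb, g2LbS _ hyLb]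
          have := finIdx_inj hxLb hyLb hxy'
          omega
    · -- cuniq
      intro p q hadj hne
      have hadj' : G.Adj ↑p ↑q := by simpa using hadj
      rw [c'mk, c'mk]
      simp only [c2aw]
      have hne' : s((↑p : V), ↑q) ≠ s(a, w) := by
        intro h
        apply hne
        rcases Sym2.eq_iff.1 h with ⟨h1, h2⟩ | ⟨h1, h2⟩
        · rw [show p = (⟨a, Finset.mem_coe.2 haS⟩ : ↥(S:Set V)) from Subtype.ext h1,
            show q = (⟨w, Finset.mem_coe.2 hwS⟩ : ↥(S:Set V)) from Subtype.ext h2]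
        · rw [show p = (⟨w, Finset.mem_coe.2 hwS⟩ : ↥(S:Set V)) from Subtype.ext h1,
            show q = (⟨a, Finset.mem_coe.2 haS⟩ : ↥(S:Set V)) from Subtype.ext h2]
          exact Sym2.eq_swap
      rcases edgeval p q hadj' with ⟨_, h⟩ | ⟨h1, _⟩
      · exact absurd h hne'
      · omega

end CaseC

section MainProof
open SimpleGraph

/-- Let `Q_k` (`k ≥ 2`) be the tree on `2k - 1` vertices obtained from two
copies of the star `K_{1,k-1}` by identifying a leaf of one with a leaf of the
other: it has two vertices `u, v` of degree `k - 1`, a vertex `w` of degree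
`2` adjacent to both, and all remaining vertices are leaves.  Then
`cfc(Q_k) = k` and `Q_k` is `k`-cfc-critical: every proper subtree has
conflict-free connection number less than `k`. -/
theorem cfc_Qk {V : Type*} [Fintype V] [DecidableEq V] (G : SimpleGraph V)
    [DecidableRel G.Adj] (hG : G.IsTree) (k : ℕ) (hk : 2 ≤ k)
    (hcard : Fintype.card V = 2 * k - 1)
    (u v w : V) (huv : u ≠ v) (hu : G.Adj u w) (hv : G.Adj v w)
    (hdu : G.degree u = k - 1) (hdv : G.degree v = k - 1) (hdw : G.degree w = 2)
    (hleaf : ∀ x : V, x ≠ u → x ≠ v → x ≠ w → G.degree x = 1) :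
    cfcNum G = k ∧
    ∀ S : Finset V, S.Nonempty → S ≠ Finset.univ →
      (G.induce (S : Set V)).Connected → cfcNum (G.induce (S : Set V)) < k := by
  classical
  have huw : u ≠ w := hu.ne
  have hvw : v ≠ w := hv.ne
  -- no edge between the two centers
  have hnadj : ¬ G.Adj u v := by
    intro h
    have p1 : (Walk.cons h Walk.nil : G.Walk u v).IsPath := by simp [h.ne]
    have p2 : (Walk.cons hu (Walk.cons hv.symm Walk.nil) : G.Walk u v).IsPath := by
      simp [Walk.isPath_def, huv, huw, Ne.symm hvw]
    have heq := congrArg (fun q => q.1.length) (hG.IsAcyclic.path_unique ⟨_, p1⟩ ⟨_, p2⟩)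
    simp [Walk.length_cons] at heq
  -- neighbors of w
  have hNw : G.neighborFinset w = {u, v} := by
    symm
    apply Finset.eq_of_subset_of_card_le
    · intro x hx
      rw [Finset.mem_insert, Finset.mem_singleton] at hx
      rw [mem_neighborFinset]
      rcases hx with rfl | rfl
      exacts [hu.symm, hv.symm]
    · rw [card_neighborFinset_eq_degree, hdw, Finset.card_insert_of_notMem (by simpa using huv),
        Finset.card_singleton]
  have S2 : ∀ x, G.Adj w x → x = u ∨ x = v := by
    intro x hx
    have : x ∈ G.neighborFinset w := (mem_neighborFinset G w x).2 hx
    rw [hNw] at this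
    simpa using this
  -- leaves have a unique neighbor
  have uniqNbr : ∀ x, x ≠ u → x ≠ v → x ≠ w → ∀ y z, G.Adj x y → G.Adj x z → y = z := by
    intro x hxu hxv hxw y z hy hz
    have hd : (G.neighborFinset x).card ≤ 1 := by
      rw [card_neighborFinset_eq_degree, hleaf x hxu hxv hxw]
    exact Finset.card_le_one.1 hd y ((mem_neighborFinset G x y).2 hy)
      z ((mem_neighborFinset G x z).2 hz)
  have hdisj : ∀ x, x ≠ w → ¬(G.Adj u x ∧ G.Adj v x) := by
    rintro x hxw ⟨h1, h2⟩
    exact huv (uniqNbr x h1.ne' h2.ne' hxw u v h1.symm h2.symm)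
  -- every vertex is u, v, w or a leaf attached to u or v
  have S4 : ∀ x, x ≠ u → x ≠ v → x ≠ w → G.Adj u x ∨ G.Adj v x := by
    intro x hxu hxv hxw
    by_contra hcon
    push_neg at hcon
    have hne : (G.neighborFinset x).Nonempty := by
      rw [← Finset.card_pos, card_neighborFinset_eq_degree, hleaf x hxu hxv hxw]
      norm_num
    obtain ⟨y, hy⟩ := hne
    have hxy : G.Adj x y := (mem_neighborFinset G x y).1 hy
    have hyu : y ≠ u := fun h => hcon.1 (h ▸ hxy).symm
    have hyv : y ≠ v := fun h => hcon.2 (h ▸ hxy).symm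
    have hyw : y ≠ w := by
      rintro rfl
      rcases S2 x hxy.symm with h | h
      exacts [hxu h, hxv h]
    obtain ⟨p⟩ := hG.isConnected.preconnected y u
    obtain ⟨z, hz, q, hq⟩ := Walk.exists_eq_cons_of_ne hyu p.toPath.1
    have hzx : z = x := uniqNbr y hyu hyv hyw z x hz hxy.symm
    subst hzx
    obtain ⟨z2, hz2, q2, hq2⟩ := Walk.exists_eq_cons_of_ne hxu q
    have hz2y : z2 = y := uniqNbr z hxu hxv hxw z2 y hz2 hxy
    subst hz2y
    have hp := p.toPath.2
    rw [hq, hq2] at hp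
    simp [Walk.isPath_def] at hp
  set Lu : Finset V := (G.neighborFinset u).erase w with hLuDef
  set Lv : Finset V := (G.neighborFinset v).erase w with hLvDef
  have memLu : ∀ x, x ∈ Lu ↔ G.Adj u x ∧ x ≠ w := by
    intro x
    rw [hLuDef, Finset.mem_erase, mem_neighborFinset]
    tauto
  have memLv : ∀ x, x ∈ Lv ↔ G.Adj v x ∧ x ≠ w := by
    intro x
    rw [hLvDef, Finset.mem_erase, mem_neighborFinset]
    tauto
  have cardLu : Lu.card = k - 2 := by
    rw [hLuDef, Finset.card_erase_of_mem ((mem_neighborFinset G u w).2 hu),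
      card_neighborFinset_eq_degree, hdu]
    omega
  have cardLv : Lv.card = k - 2 := by
    rw [hLvDef, Finset.card_erase_of_mem ((mem_neighborFinset G v w).2 hv),
      card_neighborFinset_eq_degree, hdv]
    omega
  have hclass : ∀ x, x = u ∨ x = v ∨ x = w ∨
      (G.Adj u x ∧ x ≠ v ∧ x ≠ w) ∨ (G.Adj v x ∧ x ≠ u ∧ x ≠ w) := by
    intro x
    by_cases hxu : x = u
    · exact Or.inl hxu
    by_cases hxv : x = v
    · exact Or.inr (Or.inl hxv)
    by_cases hxw : x = w
    · exact Or.inr (Or.inr (Or.inl hxw))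
    rcases S4 x hxu hxv hxw with h | h
    · exact Or.inr (Or.inr (Or.inr (Or.inl ⟨h, hxv, hxw⟩)))
    · exact Or.inr (Or.inr (Or.inr (Or.inr ⟨h, hxu, hxw⟩)))
  -- edge classification
  have S6 : ∀ a b, G.Adj a b → s(a,b) = s(u,w) ∨ s(a,b) = s(v,w) ∨
      (∃ x, x ∈ Lu ∧ s(a,b) = s(u,x)) ∨ (∃ x, x ∈ Lv ∧ s(a,b) = s(v,x)) := by
    intro a b hab
    rcases hclass a with rfl | rfl | rfl | ⟨ha1, ha2, ha3⟩ | ⟨ha1, ha2, ha3⟩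
    · by_cases hbw : b = w
      · exact Or.inl (by rw [hbw])
      · refine Or.inr (Or.inr (Or.inl ⟨b, (memLu b).2 ⟨hab, hbw⟩, rfl⟩))
    · by_cases hbw : b = w
      · exact Or.inr (Or.inl (by rw [hbw]))
      · exact Or.inr (Or.inr (Or.inr ⟨b, (memLv b).2 ⟨hab, hbw⟩, rfl⟩))
    · rcases S2 b hab with rfl | rfl
      · exact Or.inl Sym2.eq_swap
      · exact Or.inr (Or.inl Sym2.eq_swap)
    · have hbu : b = u := uniqNbr a ha1.ne' ha2 ha3 b u hab ha1.symm
      subst hbu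
      exact Or.inr (Or.inr (Or.inl ⟨a, (memLu a).2 ⟨ha1, ha3⟩, Sym2.eq_swap⟩))
    · have hbv : b = v := uniqNbr a ha2 ha1.ne' ha3 b v hab ha1.symm
      subst hbv
      exact Or.inr (Or.inr (Or.inr ⟨a, (memLv a).2 ⟨ha1, ha3⟩, Sym2.eq_swap⟩))
  -- ===== Part 1: the coloring with k colors =====
  set g : V → ℕ := fun x =>
    if x ∈ Lu then finIdx Lu x + 2 else if x ∈ Lv then finIdx Lv x + 2 else 0 with hgDef
  set cc : Sym2 V → ℕ := fun e => if e = s(u,w) then 0 else if e = s(v,w) then 1 else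
    Sym2.lift ⟨fun a b => g a + g b, fun a b => by ring⟩ e with hccDef
  have gu : g u = 0 := by
    simp only [hgDef]
    rw [if_neg (fun h => ((memLu u).1 h).1.ne rfl),
      if_neg (fun h => hnadj ((memLv u).1 h).1.symm)]
  have gv : g v = 0 := by
    simp only [hgDef]
    rw [if_neg (fun h => hnadj ((memLu v).1 h).1),
      if_neg (fun h => ((memLv v).1 h).1.ne rfl)]
  have gLu : ∀ x ∈ Lu, g x = finIdx Lu x + 2 := fun x hx => by
    simp only [hgDef]; rw [if_pos hx]
  have gLv : ∀ x ∈ Lv, g x = finIdx Lv x + 2 := fun x hx => by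
    have hxLu : x ∉ Lu := by
      intro h
      exact hdisj x ((memLu x).1 h).2 ⟨((memLu x).1 h).1, ((memLv x).1 hx).1⟩
    simp only [hgDef]; rw [if_neg hxLu, if_pos hx]
  have gBound : ∀ x, (x ∈ Lu ∨ x ∈ Lv) → 2 ≤ g x ∧ g x < k := by
    intro x hx
    rcases hx with h | h
    · rw [gLu x h]
      have h1 := finIdx_lt h
      rw [cardLu] at h1
      omega
    · rw [gLv x h]
      have h1 := finIdx_lt h
      rw [cardLv] at h1
      omega
  have ccUW : cc s(u,w) = 0 := by simp [hccDef]
  have ccVW : cc s(v,w) = 1 := by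
    simp only [hccDef]
    rw [if_neg (sym2_ne (by tauto))]
    simp
  have ccLu : ∀ x ∈ Lu, cc s(u,x) = g x := by
    intro x hx
    obtain ⟨hux, hxw⟩ := (memLu x).1 hx
    simp only [hccDef]
    rw [if_neg (sym2_ne (by tauto)), if_neg (sym2_ne (by tauto)), Sym2.lift_mk]
    simp [gu]
  have ccLv : ∀ x ∈ Lv, cc s(v,x) = g x := by
    intro x hx
    obtain ⟨hvx, hxw⟩ := (memLv x).1 hx
    have hxu : x ≠ u := fun h => hnadj (h ▸ hvx).symm
    simp only [hccDef]
    rw [if_neg (sym2_ne (by tauto)), if_neg (sym2_ne (by tauto)), Sym2.lift_mk]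
    simp [gv]
  have cinjU : ∀ x y, G.Adj u x → G.Adj u y → x ≠ y → cc s(u,x) ≠ cc s(u,y) := by
    intro x y hx hy hxy
    by_cases hxw : x = w
    · have hyw : y ≠ w := fun h => hxy (by rw [hxw, h])
      have hyLu : y ∈ Lu := (memLu y).2 ⟨hy, hyw⟩
      rw [hxw, ccUW, ccLu y hyLu]
      have := gBound y (Or.inl hyLu)
      omega
    · have hxLu : x ∈ Lu := (memLu x).2 ⟨hx, hxw⟩
      by_cases hyw : y = w
      · rw [hyw, ccUW, ccLu x hxLu]
        have := gBound x (Or.inl hxLu)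
        omega
      · have hyLu : y ∈ Lu := (memLu y).2 ⟨hy, hyw⟩
        rw [ccLu x hxLu, ccLu y hyLu, gLu x hxLu, gLu y hyLu]
        have := finIdx_inj hxLu hyLu hxy
        omega
  have cinjV : ∀ x y, G.Adj v x → G.Adj v y → x ≠ y → cc s(v,x) ≠ cc s(v,y) := by
    intro x y hx hy hxy
    by_cases hxw : x = w
    · have hyw : y ≠ w := fun h => hxy (by rw [hxw, h])
      have hyLv : y ∈ Lv := (memLv y).2 ⟨hy, hyw⟩
      rw [hxw, ccVW, ccLv y hyLv]
      have := gBound y (Or.inr hyLv)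
      omega
    · have hxLv : x ∈ Lv := (memLv x).2 ⟨hx, hxw⟩
      by_cases hyw : y = w
      · rw [hyw, ccVW, ccLv x hxLv]
        have := gBound x (Or.inr hxLv)
        omega
      · have hyLv : y ∈ Lv := (memLv y).2 ⟨hy, hyw⟩
        rw [ccLv x hxLv, ccLv y hyLv, gLv x hxLv, gLv y hyLv]
        have := finIdx_inj hxLv hyLv hxy
        omega
  have cuniq : ∀ a b, G.Adj a b → s(a,b) ≠ s(u,w) → cc s(a,b) ≠ cc s(u,w) := by
    intro a b hab hne
    rw [ccUW]
    rcases S6 a b hab with h | h | ⟨x, hx, h⟩ | ⟨x, hx, h⟩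
    · exact absurd h hne
    · rw [h, ccVW]; omega
    · rw [h, ccLu x hx]
      have := gBound x (Or.inl hx)
      omega
    · rw [h, ccLv x hx]
      have := gBound x (Or.inr hx)
      omega
  have hCFC : IsCFCColoring G cc := ds_cfc u v w hu hv huv hclass hdisj cinjU cinjV cuniq
  have hbound : ∀ e ∈ G.edgeSet, cc e < k := by
    intro e he
    induction e using Sym2.ind with
    | _ a b =>
      have hab : G.Adj a b := he
      rcases S6 a b hab with h | h | ⟨x, hx, h⟩ | ⟨x, hx, h⟩
      · rw [h, ccUW]; omega
      · rw [h, ccVW]; omega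
      · rw [h, ccLu x hx]; exact (gBound x (Or.inl hx)).2
      · rw [h, ccLv x hx]; exact (gBound x (Or.inr hx)).2
  have hkmem : k ∈ {m | ∃ c : Sym2 V → ℕ, (∀ e ∈ G.edgeSet, c e < m) ∧ IsCFCColoring G c} :=
    ⟨cc, hbound, hCFC⟩
  have hpart1 : cfcNum G = k := by
    refine le_antisymm (Nat.sInf_le hkmem) (le_csInf ⟨k, hkmem⟩ ?_)
    rintro m ⟨c, hcb, hcc'⟩
    by_contra hlt
    push_neg at hlt
    exact lb_lemma G hG k u v w huv hu hv hdu hdv hnadj hdisj c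
      (fun e he => lt_of_lt_of_le (hcb e he) (by omega)) hcc'
  refine ⟨hpart1, ?_⟩
  -- ===== Part 2: criticality =====
  intro S hSne hSuniv hSconn
  suffices hsuff : ∃ c' : Sym2 ↥(S:Set V) → ℕ,
      (∀ e ∈ (G.induce (S:Set V)).edgeSet, c' e < k-1) ∧
      IsCFCColoring (G.induce (S:Set V)) c' by
    obtain ⟨c', h1, h2⟩ := hsuff
    have : cfcNum (G.induce (S:Set V)) ≤ k - 1 := Nat.sInf_le ⟨c', h1, h2⟩
    omega
  by_cases hpair : ∀ a b : ↥(S:Set V), a = b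
  · exact ⟨fun _ => 0, fun e he => by show (0:ℕ) < k-1; omega, fun a b hab => absurd (hpair a b) hab⟩
  push_neg at hpair
  obtain ⟨a0, b0, hab0⟩ := hpair
  have firstStep : ∀ (a b : ↥(S:Set V)), a ≠ b → ∃ y : ↥(S:Set V), G.Adj ↑a ↑y := by
    intro a b hab
    obtain ⟨p⟩ := hSconn.preconnected a b
    obtain ⟨y, hy, q, -⟩ := Walk.exists_eq_cons_of_ne hab p
    exact ⟨y, by simpa using hy⟩
  have huniqU : ∀ a ∈ Lu, ∀ y, G.Adj a y → y = u := by
    intro a ha y hy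
    obtain ⟨h1, h2⟩ := (memLu a).1 ha
    exact uniqNbr a h1.ne' (fun h => hnadj (h ▸ h1)) h2 y u hy h1.symm
  have huniqV : ∀ a ∈ Lv, ∀ y, G.Adj a y → y = v := by
    intro a ha y hy
    obtain ⟨h1, h2⟩ := (memLv a).1 ha
    exact uniqNbr a (fun h => hnadj (h ▸ h1).symm) h1.ne' h2 y v hy h1.symm
  have hUnotLu : u ∉ Lu := fun h => ((memLu u).1 h).1.ne rfl
  have hVnotLv : v ∉ Lv := fun h => ((memLv v).1 h).1.ne rfl
  by_cases hwS : w ∈ S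
  · -- w ∈ S
    by_cases huS : u ∈ S
    · by_cases hvS : v ∈ S
      · -- u, v, w all in S : a leaf is missing
        obtain ⟨z, hz⟩ : ∃ z, z ∉ S := by
          by_contra hcon
          push_neg at hcon
          exact hSuniv (Finset.eq_univ_iff_forall.2 hcon)
        have hk3 : 3 ≤ k := by
          by_contra hlt
          have hk2 : k = 2 := by omega
          have hLuEmpty : Lu = ∅ := Finset.card_eq_zero.1 (by rw [cardLu, hk2])
          have hLvEmpty : Lv = ∅ := Finset.card_eq_zero.1 (by rw [cardLv, hk2])
          rcases hclass z with rfl | rfl | rfl | ⟨h1, h2, h3⟩ | ⟨h1, h2, h3⟩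
          exacts [hz huS, hz hvS, hz hwS,
            by simpa [hLuEmpty] using (memLu z).2 ⟨h1, h3⟩,
            by simpa [hLvEmpty] using (memLv z).2 ⟨h1, h3⟩]
        have hzu : z ≠ u := fun h => hz (h ▸ huS)
        have hzv : z ≠ v := fun h => hz (h ▸ hvS)
        have hzw : z ≠ w := fun h => hz (h ▸ hwS)
        rcases S4 z hzu hzv hzw with hadj | hadj
        · -- missing leaf on the u side : roles (a,b) = (v,u)
          refine caseC_lemma G S k hk3 v u w Lv Lu hvS huS hwS hv hu huv.symm
            (fun h => hnadj h.symm) memLv memLu cardLv cardLu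
            (fun x hx h => hdisj x hx ⟨h.2, h.1⟩) ?_ ?_ z ((memLu z).2 ⟨hadj, hzw⟩) hz
          · intro x
            rcases hclass x with h | h | h | h | h
            exacts [Or.inr (Or.inl h), Or.inl h, Or.inr (Or.inr (Or.inl h)),
              Or.inr (Or.inr (Or.inr (Or.inr ⟨h.1, fun hh => hnadj (hh ▸ h.1), h.2.2⟩))),
              Or.inr (Or.inr (Or.inr (Or.inl ⟨h.1, h.2.1, h.2.2⟩)))]
          · intro p q hpq
            rcases S6 p q hpq with h | h | h | h
            exacts [Or.inr (Or.inl h), Or.inl h, Or.inr (Or.inr (Or.inr h)),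
              Or.inr (Or.inr (Or.inl h))]
        · -- missing leaf on the v side : roles (a,b) = (u,v)
          refine caseC_lemma G S k hk3 u v w Lu Lv huS hvS hwS hu hv huv hnadj
            memLu memLv cardLu cardLv hdisj ?_ ?_ z ((memLv z).2 ⟨hadj, hzw⟩) hz
          · intro x
            rcases hclass x with h | h | h | h | h
            exacts [Or.inl h, Or.inr (Or.inl h), Or.inr (Or.inr (Or.inl h)),
              Or.inr (Or.inr (Or.inr (Or.inl h))),
              Or.inr (Or.inr (Or.inr (Or.inr ⟨h.1, fun hh => hnadj (hh ▸ h.1).symm, h.2.2⟩)))]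
          · exact S6
      · -- w ∈ S, u ∈ S, v ∉ S : star around u
        refine star_case G S k u (insert w Lu) huS ?_ ?_ ?_ ?_
        · have h1 := Finset.card_insert_le w Lu
          omega
        · intro x hxS hxu
          rcases eq_or_ne x w with rfl | hxw
          · exact Finset.mem_insert_self _ _
          have hxv : x ≠ v := fun h => hvS (h ▸ hxS)
          rcases S4 x hxu hxv hxw with h | h
          · exact Finset.mem_insert_of_mem ((memLu x).2 ⟨h, hxw⟩)
          · exfalso
            have hxLv : x ∈ Lv := (memLv x).2 ⟨h, hxw⟩
            obtain ⟨y, hy⟩ := firstStep ⟨x, Finset.mem_coe.2 hxS⟩ ⟨u, Finset.mem_coe.2 huS⟩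
              (fun hh => hxu (congrArg Subtype.val hh))
            exact hvS ((huniqV x hxLv ↑y hy) ▸ Finset.mem_coe.1 y.2)
        · intro x hx
          rcases Finset.mem_insert.1 hx with rfl | hx
          exacts [hu, ((memLu x).1 hx).1]
        · intro x hx y hy hadj
          rcases Finset.mem_insert.1 hx with rfl | hx <;>
            rcases Finset.mem_insert.1 hy with rfl | hy
          · exact hadj.ne rfl
          · rcases S2 y hadj with rfl | rfl
            · exact hUnotLu hy
            · exact hnadj ((memLu y).1 hy).1
          · rcases S2 x hadj.symm with rfl | rfl
            · exact hUnotLu hx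
            · exact hnadj ((memLu x).1 hx).1
          · exact hUnotLu ((huniqU x hx y hadj) ▸ hy)
    · -- w ∈ S, u ∉ S
      have hvS : v ∈ S := by
        have hxex : ∃ x : ↥(S:Set V), (↑x:V) ≠ w := by
          by_cases h : (↑a0 : V) = w
          · exact ⟨b0, fun hh => hab0 (Subtype.ext (h.trans hh.symm))⟩
          · exact ⟨a0, h⟩
        obtain ⟨x, hxw⟩ := hxex
        have hxu : (↑x:V) ≠ u := fun h => huS (h ▸ Finset.mem_coe.1 x.2)
        by_cases hxv : (↑x:V) = v
        · exact hxv ▸ Finset.mem_coe.1 x.2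
        rcases S4 ↑x hxu hxv hxw with h | h
        · exfalso
          obtain ⟨y, hy⟩ := firstStep x ⟨w, Finset.mem_coe.2 hwS⟩
            (fun hh => hxw (congrArg Subtype.val hh))
          exact huS ((huniqU ↑x ((memLu ↑x).2 ⟨h, hxw⟩) ↑y hy) ▸ Finset.mem_coe.1 y.2)
        · obtain ⟨y, hy⟩ := firstStep x ⟨w, Finset.mem_coe.2 hwS⟩
            (fun hh => hxw (congrArg Subtype.val hh))
          exact (huniqV ↑x ((memLv ↑x).2 ⟨h, hxw⟩) ↑y hy) ▸ Finset.mem_coe.1 y.2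
      refine star_case G S k v (insert w Lv) hvS ?_ ?_ ?_ ?_
      · have h1 := Finset.card_insert_le w Lv
        omega
      · intro x hxS hxv
        rcases eq_or_ne x w with rfl | hxw
        · exact Finset.mem_insert_self _ _
        have hxu : x ≠ u := fun h => huS (h ▸ hxS)
        rcases S4 x hxu hxv hxw with h | h
        · exfalso
          obtain ⟨y, hy⟩ := firstStep ⟨x, Finset.mem_coe.2 hxS⟩ ⟨w, Finset.mem_coe.2 hwS⟩
            (fun hh => hxw (congrArg Subtype.val hh))
          exact huS ((huniqU x ((memLu x).2 ⟨h, hxw⟩) ↑y hy) ▸ Finset.mem_coe.1 y.2)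
        · exact Finset.mem_insert_of_mem ((memLv x).2 ⟨h, hxw⟩)
      · intro x hx
        rcases Finset.mem_insert.1 hx with rfl | hx
        exacts [hv, ((memLv x).1 hx).1]
      · intro x hx y hy hadj
        rcases Finset.mem_insert.1 hx with rfl | hx <;>
          rcases Finset.mem_insert.1 hy with rfl | hy
        · exact hadj.ne rfl
        · rcases S2 y hadj with rfl | rfl
          · exact hnadj ((memLv y).1 hy).1.symm
          · exact hVnotLv hy
        · rcases S2 x hadj.symm with rfl | rfl
          · exact hnadj ((memLv x).1 hx).1.symm
          · exact hVnotLv hx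
        · exact hVnotLv ((huniqV x hx y hadj) ▸ hy)
  · -- w ∉ S
    have sideInv : ∀ (z : V) (Lz : Finset V),
        (∀ x, x ∈ Lz ↔ G.Adj z x ∧ x ≠ w) → (∀ a ∈ Lz, ∀ y, G.Adj a y → y = z) →
        ∀ (a b : ↥(S:Set V)) (p : (G.induce (S:Set V)).Walk a b),
          ((↑a:V) = z ∨ ↑a ∈ Lz) → ((↑b:V) = z ∨ ↑b ∈ Lz) := by
      intro z Lz hmem huniq a b p
      induction p with
      | nil => exact id
      | @cons a' x' b' h q ih =>
        intro ha
        apply ih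
        have hadj : G.Adj ↑a' ↑x' := by simpa using h
        rcases ha with ha | ha
        · right
          rw [hmem]
          exact ⟨ha ▸ hadj, fun hxw2 => hwS (hxw2 ▸ Finset.mem_coe.1 x'.2)⟩
        · left
          exact huniq ↑a' ha ↑x' hadj
    have keyU : ∀ start : ↥(S:Set V), ((↑start:V) = u ∨ ↑start ∈ Lu) →
        ∀ x ∈ S, x = u ∨ x ∈ Lu := by
      intro start hst x hx
      obtain ⟨p⟩ := hSconn.preconnected start ⟨x, Finset.mem_coe.2 hx⟩
      exact sideInv u Lu memLu huniqU _ _ p hst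
    have keyV : ∀ start : ↥(S:Set V), ((↑start:V) = v ∨ ↑start ∈ Lv) →
        ∀ x ∈ S, x = v ∨ x ∈ Lv := by
      intro start hst x hx
      obtain ⟨p⟩ := hSconn.preconnected start ⟨x, Finset.mem_coe.2 hx⟩
      exact sideInv v Lv memLv huniqV _ _ p hst
    have hside : (∀ x ∈ S, x = u ∨ x ∈ Lu) ∨ (∀ x ∈ S, x = v ∨ x ∈ Lv) := by
      rcases hclass ↑a0 with h | h | h | ⟨h1, h2, h3⟩ | ⟨h1, h2, h3⟩
      · exact Or.inl (keyU a0 (Or.inl h))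
      · exact Or.inr (keyV a0 (Or.inl h))
      · exact absurd (h ▸ Finset.mem_coe.1 a0.2) hwS
      · exact Or.inl (keyU a0 (Or.inr ((memLu _).2 ⟨h1, h3⟩)))
      · exact Or.inr (keyV a0 (Or.inr ((memLv _).2 ⟨h1, h3⟩)))
    rcases hside with hside | hside
    · have huS : u ∈ S := by
        by_contra huS
        obtain ⟨y, hy⟩ := firstStep a0 b0 hab0
        have h1 : (↑a0:V) ∈ Lu := (hside ↑a0 (Finset.mem_coe.1 a0.2)).resolve_left
          (fun h => huS (h ▸ Finset.mem_coe.1 a0.2))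
        exact huS ((huniqU ↑a0 h1 ↑y hy) ▸ Finset.mem_coe.1 y.2)
      refine star_case G S k u Lu huS (by omega) ?_ ?_ ?_
      · intro x hxS hxu
        exact (hside x hxS).resolve_left hxu
      · intro x hx
        exact ((memLu x).1 hx).1
      · intro x hx y hy hadj
        exact hUnotLu ((huniqU x hx y hadj) ▸ hy)
    · have hvS : v ∈ S := by
        by_contra hvS
        obtain ⟨y, hy⟩ := firstStep a0 b0 hab0
        have h1 : (↑a0:V) ∈ Lv := (hside ↑a0 (Finset.mem_coe.1 a0.2)).resolve_left
          (fun h => hvS (h ▸ Finset.mem_coe.1 a0.2))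
        exact hvS ((huniqV ↑a0 h1 ↑y hy) ▸ Finset.mem_coe.1 y.2)
      refine star_case G S k v Lv hvS (by omega) ?_ ?_ ?_
      · intro x hxS hxv
        exact (hside x hxS).resolve_left hxv
      · intro x hx
        exact ((memLv x).1 hx).1
      · intro x hx y hy hadj
        exact hVnotLv ((huniqV x hx y hadj) ▸ hy)

end MainProof
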